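/- Suppose w is a nonnegative locally integrable function on ℝ^n such that there exist constants c_1, c_2 > 1 with w(S)/w(Q) ≤ c_1 (|S|/|Q|)^{1/c_2} for every cube Q and every measurable S ⊆ Q (and w(Q) > 0). Then for every cube Q and measurable S ⊆ Q we have w(S)/w(Q) ≤ e (|S|/|Q|)^{1/(2 c_2 (1 + log c_1))}. -/

import Mathlib

open MeasureTheory Metric Set
open scoped ENNReal

/-- The measure `w dx` associated to a weight `w` on ℝⁿ. -/
noncomputable def weightMeasure (n : ℕ) (w : (Fin n → ℝ) → ℝ≥0∞) : Measure (Fin n → ℝ) :=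
  MeasureTheory.volume.withDensity w

/-- If a weight w satisfies w(S)/w(Q) ≤ c₁ (|S|/|Q|)^{1/c₂} for all cubes Q and measurable
S ⊆ Q, with c₁, c₂ > 1, then w(S)/w(Q) ≤ e (|S|/|Q|)^{1/(2c₂(1+log c₁))} for all cubes Q and
measurable S ⊆ Q. Cubes are closed balls in the sup metric on ℝⁿ. -/
theorem self_improving_growth_bound (n : ℕ) (w : (Fin n → ℝ) → ℝ≥0∞) (hw : Measurable w)
    (c₁ c₂ : ℝ) (hc₁ : 1 < c₁) (hc₂ : 1 < c₂)
    (hfin : ∀ (c : Fin n → ℝ) (r : ℝ), 0 < r → weightMeasure n w (closedBall c r) < ⊤)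
    (hpos : ∀ (c : Fin n → ℝ) (r : ℝ), 0 < r → 0 < weightMeasure n w (closedBall c r))
    (hgrowth : ∀ (c : Fin n → ℝ) (r : ℝ), 0 < r → ∀ S ⊆ closedBall c r, MeasurableSet S →
      weightMeasure n w S ≤
        ENNReal.ofReal c₁ * (volume S / volume (closedBall c r)) ^ (1 / c₂) *
          weightMeasure n w (closedBall c r)) :
    ∀ (c : Fin n → ℝ) (r : ℝ), 0 < r → ∀ S ⊆ closedBall c r, MeasurableSet S →
      weightMeasure n w S ≤
        ENNReal.ofReal (Real.exp 1) *
          (volume S / volume (closedBall c r)) ^ (1 / (2 * c₂ * (1 + Real.log c₁))) *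
          weightMeasure n w (closedBall c r) := by
  intro c r hr S hS hSm
  set Q := closedBall c r with hQ
  have hQpos : 0 < volume Q := measure_closedBall_pos _ _ hr
  have hQfin : volume Q < ⊤ := measure_closedBall_lt_top
  set A : ℝ≥0∞ := volume S / volume Q with hA
  have hAne : A ≠ ⊤ := by
    exact (ENNReal.div_lt_top ((measure_mono hS).trans_lt hQfin).ne hQpos.ne').ne
  have hlogpos : 0 < Real.log c₁ := Real.log_pos hc₁
  set L : ℝ := 1 + Real.log c₁ with hL
  have hL1 : 1 < L := by simp [hL]; linarith
  set β : ℝ := 1 / (2 * c₂ * L) with hβ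
  have hβpos : 0 < β := by
    apply one_div_pos.mpr; positivity
  have hβlt : β < 1 / c₂ := by
    rw [hβ, div_lt_div_iff₀ (by positivity) (by positivity)]
    nlinarith
  by_cases h1 : (1 : ℝ≥0∞) ≤ ENNReal.ofReal (Real.exp 1) * A ^ β
  · calc weightMeasure n w S ≤ weightMeasure n w Q := measure_mono hS
      _ = 1 * weightMeasure n w Q := (one_mul _).symm
      _ ≤ ENNReal.ofReal (Real.exp 1) * A ^ β * weightMeasure n w Q :=
        mul_le_mul_left h1 _
  · push_neg at h1
    by_cases hA0 : A = 0
    · have := hgrowth c r hr S hS hSm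
      rw [← hQ, ← hA, hA0] at this
      rw [ENNReal.zero_rpow_of_pos (by positivity), mul_zero, zero_mul] at this
      exact this.trans (zero_le)
    · have he0 : (ENNReal.ofReal (Real.exp 1)) ≠ 0 := by
        simp [Real.exp_pos]
      have heT : (ENNReal.ofReal (Real.exp 1)) ≠ ⊤ := ENNReal.ofReal_ne_top
      have hAβ : A ^ β ≤ ENNReal.ofReal (Real.exp (-1)) := by
        rw [← ENNReal.mul_le_mul_iff_right he0 heT, ← ENNReal.ofReal_mul (Real.exp_pos 1).le,
          ← Real.exp_add]
        simpa using h1.le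
      have hAle : A ≤ ENNReal.ofReal (Real.exp (-(1/β))) := by
        have h2 : (A ^ β) ^ (1/β) ≤ (ENNReal.ofReal (Real.exp (-1))) ^ (1/β) :=
          ENNReal.rpow_le_rpow hAβ (by positivity)
        rw [← ENNReal.rpow_mul, mul_one_div, div_self hβpos.ne', ENNReal.rpow_one,
          ENNReal.ofReal_rpow_of_pos (Real.exp_pos _), ← Real.exp_mul] at h2
        convert h2 using 3
        ring
      have key : ENNReal.ofReal c₁ * A ^ (1/c₂) ≤ ENNReal.ofReal (Real.exp 1) * A ^ β := by
        have hsplit : A ^ (1/c₂) = A ^ (1/c₂ - β) * A ^ β := by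
          rw [← ENNReal.rpow_add _ _ hA0 hAne]
          ring_nf
        rw [hsplit, ← mul_assoc]
        refine mul_le_mul_left ?_ _
        calc ENNReal.ofReal c₁ * A ^ (1/c₂ - β)
            ≤ ENNReal.ofReal c₁ * (ENNReal.ofReal (Real.exp (-(1/β)))) ^ (1/c₂ - β) :=
              mul_le_mul_right (ENNReal.rpow_le_rpow hAle (by linarith)) _
          _ = ENNReal.ofReal (c₁ * Real.exp (-(1/β) * (1/c₂ - β))) := by
              rw [ENNReal.ofReal_rpow_of_pos (Real.exp_pos _), ← Real.exp_mul,
                ← ENNReal.ofReal_mul (by linarith)]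
          _ ≤ ENNReal.ofReal (Real.exp 1) := by
              apply ENNReal.ofReal_le_ofReal
              have hexp : -(1/β) * (1/c₂ - β) = -(2*L - 1) := by
                rw [hβ]
                field_simp
              rw [hexp]
              rw [show c₁ = Real.exp (Real.log c₁) from (Real.exp_log (by linarith)).symm,
                ← Real.exp_add]
              apply Real.exp_le_exp.mpr
              rw [hL]; linarith
      calc weightMeasure n w S
          ≤ ENNReal.ofReal c₁ * A ^ (1/c₂) * weightMeasure n w Q := by
            have := hgrowth c r hr S hS hSm
            rwa [← hQ, ← hA] at this
        _ ≤ ENNReal.ofReal (Real.exp 1) * A ^ β * weightMeasure n w Q :=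
            mul_le_mul_left key _
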